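/- Let $z_0 \in \mathbb{R}$, let $\alpha_{t-1}, \alpha_t \in (0,1)$, and let $\sigma \geq 0$ with $\sigma^2 \leq 1 - \alpha_{t-1}$. Let $Z_t$ and $N$ be independent real random variables on a probability space, with $Z_t$ distributed as the Gaussian $\mathcal{N}(\sqrt{\alpha_t}\, z_0,\, 1-\alpha_t)$ and $N$ distributed as $\mathcal{N}(0,1)$. Then the random variable $Z_{t-1} := \sqrt{\alpha_{t-1}}\, z_0 + \sqrt{1-\alpha_{t-1}-\sigma^2}\, \frac{Z_t - \sqrt{\alpha_t}\, z_0}{\sqrt{1-\alpha_t}} + \sigma N$ is distributed as the Gaussian $\mathcal{N}(\sqrt{\alpha_{t-1}}\, z_0,\, 1-\alpha_{t-1})$. -/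

import Mathlib

open MeasureTheory ProbabilityTheory Real
open scoped ENNReal NNReal

section Aux

lemma gaussianPDFReal_mul_eq (s t : ℝ≥0) (hs : s ≠ 0) (ht : t ≠ 0) (u : ℝ) :
    (fun x => gaussianPDFReal 0 s x * gaussianPDFReal 0 t (u - x)) =
      fun x => ((Real.sqrt (2 * π * s))⁻¹ * (Real.sqrt (2 * π * t))⁻¹ *
          Real.exp (-u ^ 2 / (2 * ((s : ℝ) + t)))) *
        Real.exp (-(((s : ℝ) + t) / (2 * s * t)) * (x - (s : ℝ) * u / ((s : ℝ) + t)) ^ 2) := by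
  have hs' : (0 : ℝ) < s := lt_of_le_of_ne s.coe_nonneg (by exact_mod_cast hs.symm)
  have ht' : (0 : ℝ) < t := lt_of_le_of_ne t.coe_nonneg (by exact_mod_cast ht.symm)
  have hst : (0 : ℝ) < (s : ℝ) + t := by linarith
  funext x
  simp only [gaussianPDFReal, sub_zero]
  have hexp : Real.exp (-x ^ 2 / (2 * s)) * Real.exp (-(u - x) ^ 2 / (2 * t)) =
      Real.exp (-u ^ 2 / (2 * ((s : ℝ) + t))) *
        Real.exp (-(((s : ℝ) + t) / (2 * s * t)) * (x - (s : ℝ) * u / ((s : ℝ) + t)) ^ 2) := by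
    rw [← Real.exp_add, ← Real.exp_add]
    congr 1
    field_simp
    ring
  calc (Real.sqrt (2 * π * s))⁻¹ * Real.exp (-x ^ 2 / (2 * s)) *
        ((Real.sqrt (2 * π * t))⁻¹ * Real.exp (-(u - x) ^ 2 / (2 * t)))
      = (Real.sqrt (2 * π * s))⁻¹ * (Real.sqrt (2 * π * t))⁻¹ *
        (Real.exp (-x ^ 2 / (2 * s)) * Real.exp (-(u - x) ^ 2 / (2 * t))) := by ring
    _ = _ := by rw [hexp]; ring

lemma integral_gaussianPDFReal_conv (s t : ℝ≥0) (hs : s ≠ 0) (ht : t ≠ 0) (u : ℝ) :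
    ∫ x, gaussianPDFReal 0 s x * gaussianPDFReal 0 t (u - x) =
      gaussianPDFReal 0 (s + t) u := by
  have hs' : (0 : ℝ) < s := lt_of_le_of_ne s.coe_nonneg (by exact_mod_cast hs.symm)
  have ht' : (0 : ℝ) < t := lt_of_le_of_ne t.coe_nonneg (by exact_mod_cast ht.symm)
  have hst : (0 : ℝ) < (s : ℝ) + t := by linarith
  have hπ := Real.pi_pos
  have ha : (0 : ℝ) < ((s : ℝ) + t) / (2 * s * t) := by positivity
  rw [gaussianPDFReal_mul_eq s t hs ht u]
  rw [integral_const_mul,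
    integral_sub_right_eq_self
      (fun x => Real.exp (-(((s : ℝ) + t) / (2 * s * t)) * x ^ 2)) ((s : ℝ) * u / ((s : ℝ) + t)),
    integral_gaussian]
  simp only [gaussianPDFReal, sub_zero]
  have hcast : ((s + t : ℝ≥0) : ℝ) = (s : ℝ) + t := by push_cast; ring
  rw [hcast]
  have hsqrt : (Real.sqrt (2 * π * s))⁻¹ * (Real.sqrt (2 * π * t))⁻¹ *
      Real.sqrt (π / (((s : ℝ) + t) / (2 * s * t))) = (Real.sqrt (2 * π * ((s : ℝ) + t)))⁻¹ := by
    rw [← Real.sqrt_inv, ← Real.sqrt_inv, ← Real.sqrt_inv,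
      ← Real.sqrt_mul (by positivity), ← Real.sqrt_mul (by positivity)]
    congr 1
    field_simp
  calc (Real.sqrt (2 * π * s))⁻¹ * (Real.sqrt (2 * π * t))⁻¹ *
        Real.exp (-u ^ 2 / (2 * ((s : ℝ) + t))) *
        Real.sqrt (π / (((s : ℝ) + t) / (2 * s * t)))
      = ((Real.sqrt (2 * π * s))⁻¹ * (Real.sqrt (2 * π * t))⁻¹ *
        Real.sqrt (π / (((s : ℝ) + t) / (2 * s * t)))) *
        Real.exp (-u ^ 2 / (2 * ((s : ℝ) + t))) := by ring
    _ = _ := by rw [hsqrt]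

lemma integrable_gaussianPDFReal_conv (s t : ℝ≥0) (hs : s ≠ 0) (ht : t ≠ 0) (u : ℝ) :
    Integrable (fun x => gaussianPDFReal 0 s x * gaussianPDFReal 0 t (u - x)) := by
  have hs' : (0 : ℝ) < s := lt_of_le_of_ne s.coe_nonneg (by exact_mod_cast hs.symm)
  have ht' : (0 : ℝ) < t := lt_of_le_of_ne t.coe_nonneg (by exact_mod_cast ht.symm)
  have ha : (0 : ℝ) < ((s : ℝ) + t) / (2 * s * t) := by positivity
  rw [gaussianPDFReal_mul_eq s t hs ht u]
  exact ((integrable_exp_neg_mul_sq ha).comp_sub_right _).const_mul _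

lemma lintegral_gaussianPDF_conv (s t : ℝ≥0) (hs : s ≠ 0) (ht : t ≠ 0) (u : ℝ) :
    ∫⁻ x, gaussianPDF 0 s x * gaussianPDF 0 t (u - x) = gaussianPDF 0 (s + t) u := by
  simp_rw [gaussianPDF, ← ENNReal.ofReal_mul (gaussianPDFReal_nonneg 0 s _)]
  rw [← ofReal_integral_eq_lintegral_ofReal (integrable_gaussianPDFReal_conv s t hs ht u)
    (Filter.Eventually.of_forall fun x =>
      mul_nonneg (gaussianPDFReal_nonneg _ _ _) (gaussianPDFReal_nonneg _ _ _)),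
    integral_gaussianPDFReal_conv s t hs ht u]


lemma gaussianReal_conv_gaussianReal (s t : ℝ≥0) (hs : s ≠ 0) (ht : t ≠ 0) :
    Measure.map (fun p : ℝ × ℝ => p.1 + p.2) ((gaussianReal 0 s).prod (gaussianReal 0 t)) =
      gaussianReal 0 (s + t) := by
  have hadd : Measurable (fun p : ℝ × ℝ => p.1 + p.2) := measurable_fst.add measurable_snd
  refine Measure.ext_of_Iic _ _ (fun r => ?_)
  rw [Measure.map_apply hadd measurableSet_Iic]
  have hS : MeasurableSet ((fun p : ℝ × ℝ => p.1 + p.2) ⁻¹' Set.Iic r) :=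
    hadd measurableSet_Iic
  rw [Measure.prod_apply hS]
  rw [gaussianReal_of_var_ne_zero 0 hs,
    lintegral_withDensity_eq_lintegral_mul _ (measurable_gaussianPDF 0 s)
      (measurable_measure_prodMk_left hS)]
  have hsec : ∀ x : ℝ,
      (Prod.mk x ⁻¹' ((fun p : ℝ × ℝ => p.1 + p.2) ⁻¹' Set.Iic r)) = Set.Iic (r - x) := by
    intro x
    ext y
    simp only [Set.mem_preimage, Set.mem_Iic]
    constructor <;> intro h <;> linarith
  have hQ : ∀ x : ℝ, gaussianReal 0 t (Set.Iic (r - x)) =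
      ∫⁻ u in Set.Iic r, gaussianPDF 0 t (u - x) := by
    intro x
    rw [gaussianReal_of_var_ne_zero 0 ht, withDensity_apply _ measurableSet_Iic,
      (measurePreserving_sub_right volume x).setLIntegral_comp_emb
        (MeasurableEquiv.subRight x).measurableEmbedding (gaussianPDF 0 t) (Set.Iic r)]
    congr 1
    rw [Set.image_sub_const_Iic]
  have step1 : ∫⁻ x, (gaussianPDF 0 s * fun x =>
        gaussianReal 0 t (Prod.mk x ⁻¹' ((fun p : ℝ × ℝ => p.1 + p.2) ⁻¹' Set.Iic r))) x =
      ∫⁻ x, ∫⁻ u in Set.Iic r, gaussianPDF 0 s x * gaussianPDF 0 t (u - x) := by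
    refine lintegral_congr fun x => ?_
    simp only [Pi.mul_apply, hsec, hQ]
    exact (lintegral_const_mul _
      ((measurable_gaussianPDF 0 t).comp (measurable_id.sub_const x))).symm
  rw [step1]
  have hmeas : AEMeasurable (Function.uncurry fun x u =>
      gaussianPDF 0 s x * gaussianPDF 0 t (u - x))
      (volume.prod (volume.restrict (Set.Iic r))) := by
    refine Measurable.aemeasurable ?_
    exact ((measurable_gaussianPDF 0 s).comp measurable_fst).mul
      ((measurable_gaussianPDF 0 t).comp (measurable_snd.sub measurable_fst))
  rw [lintegral_lintegral_swap hmeas]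
  have step2 : ∫⁻ u in Set.Iic r, ∫⁻ x, gaussianPDF 0 s x * gaussianPDF 0 t (u - x) =
      ∫⁻ u in Set.Iic r, gaussianPDF 0 (s + t) u :=
    lintegral_congr fun u => lintegral_gaussianPDF_conv s t hs ht u
  rw [step2, gaussianReal_of_var_ne_zero 0 (by simp [hs]), withDensity_apply _ measurableSet_Iic]

lemma aemeasurable_of_map_gaussianReal {Ω : Type*} [MeasurableSpace Ω] {μ : Measure Ω}
    {X : Ω → ℝ} {m : ℝ} {v : ℝ≥0} (hX : Measure.map X μ = gaussianReal m v) :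
    AEMeasurable X μ := by
  by_contra hc
  rw [Measure.map_of_not_aemeasurable hc] at hX
  have h1 : (gaussianReal m v) Set.univ = 1 := measure_univ
  rw [← hX] at h1
  simp at h1

lemma indepFun_gaussianReal_add_zero_mean {Ω : Type*} [MeasurableSpace Ω] (μ : Measure Ω)
    [IsProbabilityMeasure μ] {s t : ℝ≥0} {X Y : Ω → ℝ}
    (hX : Measure.map X μ = gaussianReal 0 s) (hY : Measure.map Y μ = gaussianReal 0 t)
    (h : IndepFun X Y μ) :
    Measure.map (fun ω => X ω + Y ω) μ = gaussianReal 0 (s + t) := by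
  have hXm : AEMeasurable X μ := aemeasurable_of_map_gaussianReal hX
  have hYm : AEMeasurable Y μ := aemeasurable_of_map_gaussianReal hY
  have hdirac : ∀ {Z : Ω → ℝ}, AEMeasurable Z μ → Measure.map Z μ = gaussianReal 0 0 →
      Z =ᵐ[μ] fun _ => 0 := by
    intro Z hZm hZ
    rw [gaussianReal_zero_var] at hZ
    have h0 : μ (Z ⁻¹' ({0}ᶜ)) = 0 := by
      rw [← Measure.map_apply_of_aemeasurable hZm (measurableSet_singleton (0:ℝ)).compl, hZ,
        Measure.dirac_apply' _ (measurableSet_singleton (0:ℝ)).compl]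
      simp
    rw [Filter.eventuallyEq_iff_exists_mem]
    exact ⟨(Z ⁻¹' ({0}ᶜ))ᶜ, by rwa [MeasureTheory.mem_ae_iff, compl_compl],
      fun ω hω => by simpa using hω⟩
  by_cases hs : s = 0
  · subst hs
    have hX0 : X =ᵐ[μ] fun _ => 0 := hdirac hXm hX
    have hae : (fun ω => X ω + Y ω) =ᵐ[μ] Y := hX0.mono fun ω hω => by simp [hω]
    rw [Measure.map_congr hae, hY, zero_add]
  by_cases ht : t = 0
  · subst ht
    have hY0 : Y =ᵐ[μ] fun _ => 0 := hdirac hYm hY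
    have hae : (fun ω => X ω + Y ω) =ᵐ[μ] X := hY0.mono fun ω hω => by simp [hω]
    rw [Measure.map_congr hae, hX, add_zero]
  have hcomp : (fun ω => X ω + Y ω) = (fun p : ℝ × ℝ => p.1 + p.2) ∘ (fun ω => (X ω, Y ω)) := rfl
  rw [hcomp, ← AEMeasurable.map_map_of_aemeasurable (g := fun p : ℝ × ℝ => p.1 + p.2)
      (measurable_fst.add measurable_snd).aemeasurable (hXm.prodMk hYm),
    (indepFun_iff_map_prod_eq_prod_map_map hXm hYm).mp h, hX, hY,
    gaussianReal_conv_gaussianReal s t hs ht]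

lemma indepFun_gaussianReal_add {Ω : Type*} [MeasurableSpace Ω] (μ : Measure Ω)
    [IsProbabilityMeasure μ] {m₁ m₂ : ℝ} {s t : ℝ≥0} {X Y : Ω → ℝ}
    (hX : Measure.map X μ = gaussianReal m₁ s) (hY : Measure.map Y μ = gaussianReal m₂ t)
    (h : IndepFun X Y μ) :
    Measure.map (fun ω => X ω + Y ω) μ = gaussianReal (m₁ + m₂) (s + t) := by
  have hXm : AEMeasurable X μ := aemeasurable_of_map_gaussianReal hX
  have hYm : AEMeasurable Y μ := aemeasurable_of_map_gaussianReal hY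
  have hX0 : Measure.map (fun ω => X ω + -m₁) μ = gaussianReal 0 s := by
    have : (fun ω => X ω + -m₁) = (· + -m₁) ∘ X := rfl
    rw [this, ← AEMeasurable.map_map_of_aemeasurable
        (measurable_id'.add_const _).aemeasurable hXm, hX, gaussianReal_map_add_const,
      add_neg_cancel]
  have hY0 : Measure.map (fun ω => Y ω + -m₂) μ = gaussianReal 0 t := by
    have : (fun ω => Y ω + -m₂) = (· + -m₂) ∘ Y := rfl
    rw [this, ← AEMeasurable.map_map_of_aemeasurable
        (measurable_id'.add_const _).aemeasurable hYm, hY, gaussianReal_map_add_const,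
      add_neg_cancel]
  have h0 : IndepFun (fun ω => X ω + -m₁) (fun ω => Y ω + -m₂) μ :=
    h.comp (measurable_id'.add_const (-m₁)) (measurable_id'.add_const (-m₂))
  have hsum : Measure.map (fun ω => (X ω + -m₁) + (Y ω + -m₂)) μ = gaussianReal 0 (s + t) :=
    indepFun_gaussianReal_add_zero_mean μ hX0 hY0 h0
  have hrw : (fun ω => X ω + Y ω) =
      (· + (m₁ + m₂)) ∘ (fun ω => (X ω + -m₁) + (Y ω + -m₂)) := by
    funext ω; simp only [Function.comp_apply]; ring
  have hsm : AEMeasurable (fun ω => (X ω + -m₁) + (Y ω + -m₂)) μ :=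
    (hXm.add_const _).add (hYm.add_const _)
  rw [hrw, ← AEMeasurable.map_map_of_aemeasurable
      (measurable_id'.add_const _).aemeasurable hsm, hsum, gaussianReal_map_add_const, zero_add]

end Aux

/-- Coordinatewise marginal preservation of the non-Markovian DDIM forward process:
if `Z_t ~ N(√α_t z_0, 1-α_t)` and `N ~ N(0,1)` are independent, then
`Z_{t-1} = √α_{t-1} z_0 + √(1-α_{t-1}-σ²) (Z_t - √α_t z_0)/√(1-α_t) + σ N` is distributed
as `N(√α_{t-1} z_0, 1-α_{t-1})`. -/
theorem ddim_forward_marginal_preservation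
    {Ω : Type*} [MeasurableSpace Ω] (μ : Measure Ω) [IsProbabilityMeasure μ]
    (z0 : ℝ) (αtm1 αt : ℝ)
    (hαtm1 : αtm1 ∈ Set.Ioo (0 : ℝ) 1) (hαt : αt ∈ Set.Ioo (0 : ℝ) 1)
    (σ : ℝ) (hσ : 0 ≤ σ) (hσ2 : σ ^ 2 ≤ 1 - αtm1)
    (Zt N : Ω → ℝ)
    (hZt : Measure.map Zt μ = gaussianReal (Real.sqrt αt * z0) (1 - αt).toNNReal)
    (hN : Measure.map N μ = gaussianReal 0 1)
    (hindep : IndepFun Zt N μ) :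
    Measure.map
        (fun ω => Real.sqrt αtm1 * z0 +
          Real.sqrt (1 - αtm1 - σ ^ 2) * ((Zt ω - Real.sqrt αt * z0) / Real.sqrt (1 - αt)) +
          σ * N ω) μ
      = gaussianReal (Real.sqrt αtm1 * z0) (1 - αtm1).toNNReal := by
  have hA : (0:ℝ) ≤ 1 - αtm1 - σ ^ 2 := by linarith
  have hB : (0:ℝ) < 1 - αt := by linarith [hαt.2]
  set c : ℝ := Real.sqrt (1 - αtm1 - σ ^ 2) / Real.sqrt (1 - αt) with hc
  have hc2 : c ^ 2 = (1 - αtm1 - σ ^ 2) / (1 - αt) := by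
    rw [hc, div_pow, Real.sq_sqrt hA, Real.sq_sqrt hB.le]
  set K : ℝ := Real.sqrt αtm1 * z0 - c * (Real.sqrt αt * z0) with hK
  have hZm : AEMeasurable Zt μ := aemeasurable_of_map_gaussianReal hZt
  have hNm : AEMeasurable N μ := aemeasurable_of_map_gaussianReal hN
  -- distribution of X := K + c * Zt
  have h1 : Measure.map (fun ω => c * Zt ω) μ =
      gaussianReal (c * (Real.sqrt αt * z0)) (NNReal.mk (c ^ 2) (sq_nonneg c) * (1 - αt).toNNReal) := by
    rw [show (fun ω => c * Zt ω) = (c * ·) ∘ Zt from rfl,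
      ← AEMeasurable.map_map_of_aemeasurable (measurable_id'.const_mul c).aemeasurable hZm,
      hZt, gaussianReal_map_const_mul]
  have hvar1 : (NNReal.mk (c ^ 2) (sq_nonneg c) * (1 - αt).toNNReal : ℝ≥0) =
      (1 - αtm1 - σ ^ 2).toNNReal := by
    apply NNReal.coe_injective
    push_cast
    rw [Real.coe_toNNReal _ hB.le, Real.coe_toNNReal _ hA, hc2]
    field_simp
  have hX : Measure.map (fun ω => K + c * Zt ω) μ =
      gaussianReal (Real.sqrt αtm1 * z0) ((1 - αtm1 - σ ^ 2).toNNReal) := by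
    rw [show (fun ω => K + c * Zt ω) = (K + ·) ∘ (fun ω => c * Zt ω) from rfl,
      ← AEMeasurable.map_map_of_aemeasurable (measurable_id'.const_add K).aemeasurable
        (hZm.const_mul c), h1, gaussianReal_map_const_add, hvar1]
    congr 1
    rw [hK]; ring
  -- distribution of Y := σ * N
  have hY : Measure.map (fun ω => σ * N ω) μ = gaussianReal 0 ((σ ^ 2).toNNReal) := by
    rw [show (fun ω => σ * N ω) = (σ * ·) ∘ N from rfl,
      ← AEMeasurable.map_map_of_aemeasurable (measurable_id'.const_mul σ).aemeasurable hNm,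
      hN, gaussianReal_map_const_mul, mul_zero]
    congr 1
    apply NNReal.coe_injective
    push_cast
    rw [Real.coe_toNNReal _ (sq_nonneg σ)]
    ring
  have hind : IndepFun (fun ω => K + c * Zt ω) (fun ω => σ * N ω) μ :=
    hindep.comp ((measurable_id'.const_mul c).const_add K) (measurable_id'.const_mul σ)
  have hsum := indepFun_gaussianReal_add μ hX hY hind
  have hfun : (fun ω => Real.sqrt αtm1 * z0 +
        Real.sqrt (1 - αtm1 - σ ^ 2) * ((Zt ω - Real.sqrt αt * z0) / Real.sqrt (1 - αt)) +
        σ * N ω) = fun ω => (K + c * Zt ω) + σ * N ω := by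
    funext ω
    rw [hK, hc]
    ring
  rw [hfun, hsum, add_zero, ← Real.toNNReal_add hA (sq_nonneg σ)]
  congr 2
  ring
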